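/- Let μ and ν be atomless probability measures on ℝ with finite first moments, K₂ < K₁ reals, and f < x < g reals with f < K₂, x < K₁ < g, satisfying μ((f,x)) = ν((f,g)), ∫_{(f,x)} w dμ(w) = ∫_{(f,g)} w dν(w), and (K₂ − f)/(g − f) = (K₁ − x)/(g − x) =: Θ. Suppose there exists a martingale coupling π* of μ and ν such that π*({(w,y) : w < f and y ≠ w}) = 0, π*({(w,y) : f < w < x and ¬(f < y < g)}) = 0, and π*({(w,y) : ¬(f < w < x) and f < y < g}) = 0. Then the supremum of A(π,B) over all martingale couplings π of μ and ν and all Borel sets B equals Θ·P_ν(g) + (1 − Θ)·P_ν(f) + (1 − Θ)·(P_μ(x) − P_μ(f)), and it is attained by π = π* with B = (−∞, x). -/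

import Mathlib

open MeasureTheory Set

/-- The put price function `P_η(k) = ∫ (k-x)⁺ dη(x)`. -/
noncomputable def putPrice (η : Measure ℝ) (k : ℝ) : ℝ := ∫ x, max (k - x) 0 ∂η

/-- `π` is a martingale coupling of `μ` and `ν`. -/
def IsMartingaleCoupling (μ ν : Measure ℝ) (π : Measure (ℝ × ℝ)) : Prop :=
  IsProbabilityMeasure π ∧ π.map Prod.fst = μ ∧ π.map Prod.snd = ν ∧
    ∀ B : Set ℝ, MeasurableSet B →
      ∫ p in B ×ˢ (Set.univ : Set ℝ), p.2 ∂π = ∫ x in B, x ∂μ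

/-- The American-put payoff under coupling `π` and exercise set `B`. -/
noncomputable def amPayoff (K₁ K₂ : ℝ) (π : Measure (ℝ × ℝ)) (B : Set ℝ) : ℝ :=
  ∫ p, (B.indicator (fun x => max (K₁ - x) 0) p.1
      + Bᶜ.indicator (fun _ => max (K₂ - p.2) 0) p.1) ∂π

/-! ### Auxiliary hedging functions -/

noncomputable def ell (Θ f g y : ℝ) : ℝ := Θ * max (g - y) 0 + (1 - Θ) * max (f - y) 0
noncomputable def phi (Θ f x w : ℝ) : ℝ := (1 - Θ) * (max (x - w) 0 - max (f - w) 0)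
noncomputable def psi (Θ f g : ℝ) (w : ℝ) : ℝ := if w ≤ f then 1 else if w ≤ g then Θ else 0

structure Setup (Θ f x g K₁ K₂ : ℝ) : Prop where
  hfx : f < x
  hxg : x < g
  hfK₂ : f < K₂
  hxK₁ : x < K₁
  hK₁g : K₁ < g
  hA : Θ * (g - f) = K₂ - f
  hB : Θ * (g - x) = K₁ - x

namespace Setup

variable {Θ f x g K₁ K₂ : ℝ}

lemma hΘ0 (S : Setup Θ f x g K₁ K₂) : 0 < Θ := by
  by_contra h
  push_neg at h
  have : Θ * (g - f) ≤ 0 := mul_nonpos_of_nonpos_of_nonneg h (by linarith [S.hfx, S.hxg])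
  linarith [S.hA, S.hfK₂]

lemma hΘ1 (S : Setup Θ f x g K₁ K₂) : Θ < 1 := by
  by_contra h
  push_neg at h
  have : 1 * (g - x) ≤ Θ * (g - x) :=
    mul_le_mul_of_nonneg_right h (by linarith [S.hxg])
  linarith [S.hB, S.hK₁g]

lemma hkey1 (S : Setup Θ f x g K₁ K₂) : Θ * g + (1 - Θ) * x = K₁ := by
  linear_combination S.hB

lemma hkey2' (S : Setup Θ f x g K₁ K₂) : Θ * g + (1 - Θ) * f = K₂ := by
  linear_combination S.hA

lemma hK₂g (S : Setup Θ f x g K₁ K₂) : K₂ < g := by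
  have h1 := S.hΘ1
  nlinarith [S.hA, S.hfx, S.hxg]

lemma ell_nonneg (S : Setup Θ f x g K₁ K₂) (y : ℝ) : 0 ≤ ell Θ f g y := by
  have h0 := S.hΘ0; have h1 := S.hΘ1
  have m1 := le_max_right (g - y) 0
  have m2 := le_max_right (f - y) 0
  unfold ell
  nlinarith

lemma ell_ge (S : Setup Θ f x g K₁ K₂) (y : ℝ) : max (K₂ - y) 0 ≤ ell Θ f g y := by
  have h0 := S.hΘ0; have h1 := S.hΘ1
  have hk2 := S.hkey2'
  have hfg : f < g := lt_trans S.hfx S.hxg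
  have hK₂g := S.hK₂g
  rcases le_total (K₂ - y) 0 with hy | hy
  · rw [max_eq_right hy]; exact S.ell_nonneg y
  · rw [max_eq_left hy]
    unfold ell
    rcases le_total y f with h | h
    · rw [max_eq_left (by linarith), max_eq_left (by linarith)]
      linarith
    · rw [max_eq_right (by linarith : f - y ≤ 0), max_eq_left (by linarith)]
      nlinarith

lemma ell_add (S : Setup Θ f x g K₁ K₂) (y : ℝ) : K₂ ≤ ell Θ f g y + y := by
  have h0 := S.hΘ0; have h1 := S.hΘ1
  have hk2 := S.hkey2'
  have hfg : f < g := lt_trans S.hfx S.hxg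
  have hK₂g := S.hK₂g
  unfold ell
  rcases le_total y f with h | h
  · rw [max_eq_left (by linarith), max_eq_left (by linarith)]
    linarith
  · rcases le_total y g with h' | h'
    · rw [max_eq_left (by linarith), max_eq_right (by linarith : f - y ≤ 0)]
      nlinarith
    · rw [max_eq_right (by linarith : g - y ≤ 0), max_eq_right (by linarith : f - y ≤ 0)]
      linarith

lemma ell_addΘ (S : Setup Θ f x g K₁ K₂) (y : ℝ) : Θ * g ≤ ell Θ f g y + Θ * y := by
  have h0 := S.hΘ0; have h1 := S.hΘ1
  have hfg : f < g := lt_trans S.hfx S.hxg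
  unfold ell
  rcases le_total y f with h | h
  · rw [max_eq_left (by linarith), max_eq_left (by linarith)]
    nlinarith
  · rcases le_total y g with h' | h'
    · rw [max_eq_left (by linarith), max_eq_right (by linarith : f - y ≤ 0)]
      linarith
    · rw [max_eq_right (by linarith : g - y ≤ 0), max_eq_right (by linarith : f - y ≤ 0)]
      nlinarith

lemma phi_nonneg (S : Setup Θ f x g K₁ K₂) (w : ℝ) : 0 ≤ phi Θ f x w := by
  have h1 := S.hΘ1
  unfold phi
  have : max (f - w) 0 ≤ max (x - w) 0 := max_le_max (by linarith [S.hfx]) le_rfl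
  nlinarith

/-- The pointwise superhedging inequality. -/
lemma hedge_ge (S : Setup Θ f x g K₁ K₂) (B : Set ℝ) (w y : ℝ) :
    B.indicator (fun w => max (K₁ - w) 0) w + Bᶜ.indicator (fun _ => max (K₂ - y) 0) w
      ≤ phi Θ f x w + ell Θ f g y + B.indicator (psi Θ f g) w * (y - w) := by
  have h0 := S.hΘ0; have h1 := S.hΘ1
  have hk1 := S.hkey1; have hk2 := S.hkey2'
  by_cases hw : w ∈ B
  · rw [indicator_of_mem hw, indicator_of_mem hw,
      indicator_of_notMem (by simp [hw] : w ∉ Bᶜ), add_zero]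
    unfold psi phi
    rcases le_or_gt w f with h | h
    · rw [if_pos h, max_eq_left (by linarith [S.hfx, S.hxK₁] : 0 ≤ K₁ - w),
        max_eq_left (by linarith [S.hfx] : 0 ≤ x - w), max_eq_left (by linarith : 0 ≤ f - w)]
      have := S.ell_add y
      linarith
    · rw [if_neg (not_le.mpr h), max_eq_right (by linarith : f - w ≤ 0)]
      rcases le_or_gt w g with h' | h'
      · rw [if_pos h']
        have hel := S.ell_addΘ y
        rcases le_total w x with hx | hx
        · rw [max_eq_left (by linarith [S.hxK₁]), max_eq_left (by linarith)]
          linarith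
        · rw [max_eq_right (by linarith : x - w ≤ 0)]
          rcases le_total w K₁ with hk | hk
          · rw [max_eq_left (by linarith)]
            have hprod : 0 ≤ (1 - Θ) * (w - x) := mul_nonneg (by linarith) (by linarith)
            nlinarith
          · rw [max_eq_right (by linarith : K₁ - w ≤ 0)]
            have hprod : 0 ≤ Θ * (g - w) := mul_nonneg (by linarith) (by linarith)
            nlinarith
      · rw [if_neg (not_le.mpr h'), max_eq_right (by linarith [S.hK₁g] : K₁ - w ≤ 0),
          max_eq_right (by linarith [S.hxg] : x - w ≤ 0)]
        have := S.ell_nonneg y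
        linarith
  · rw [indicator_of_notMem hw, indicator_of_notMem hw,
      indicator_of_mem (mem_compl hw), zero_add, zero_mul, add_zero]
    have := S.ell_ge y
    have := S.phi_nonneg w
    linarith

end Setup

/-! ### Integrability lemmas -/

lemma put_integrable (η : Measure ℝ) [IsFiniteMeasure η]
    (h : Integrable (fun w => w) η) (k : ℝ) :
    Integrable (fun w => max (k - w) 0) η := by
  refine ((integrable_const |k|).add h.abs).mono' ?_ ?_
  · exact ((continuous_const.sub continuous_id).max continuous_const).aestronglyMeasurable
  · filter_upwards with w
    simp only [Pi.add_apply]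
    rw [Real.norm_eq_abs, abs_of_nonneg (le_max_right _ _)]
    have h1 := le_abs_self k
    have h2 := neg_abs_le w
    have h3 := abs_nonneg k
    have h4 := abs_nonneg w
    exact max_le (by linarith) (by linarith)

section Coupling

variable {μ ν : Measure ℝ} {π : Measure (ℝ × ℝ)}

lemma coupling_fst_integrable (hπ : IsMartingaleCoupling μ ν π)
    (hμint : Integrable (fun w => w) μ) :
    Integrable (fun p : ℝ × ℝ => p.1) π := by
  obtain ⟨hprob, hfst, hsnd, hmart⟩ := hπ
  have h := hμint
  rw [← hfst] at h
  have := (integrable_map_measure measurable_id.aestronglyMeasurable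
    measurable_fst.aemeasurable).mp h
  simpa [Function.comp] using this

lemma coupling_snd_integrable (hπ : IsMartingaleCoupling μ ν π)
    (hνint : Integrable (fun w => w) ν) :
    Integrable (fun p : ℝ × ℝ => p.2) π := by
  obtain ⟨hprob, hfst, hsnd, hmart⟩ := hπ
  have h := hνint
  rw [← hsnd] at h
  have := (integrable_map_measure measurable_id.aestronglyMeasurable
    measurable_snd.aemeasurable).mp h
  simpa [Function.comp] using this

lemma coupling_mart_zero (hπ : IsMartingaleCoupling μ ν π)
    (hμint : Integrable (fun w => w) μ) (hνint : Integrable (fun w => w) ν)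
    (C : Set ℝ) (hC : MeasurableSet C) :
    ∫ p in C ×ˢ (univ : Set ℝ), (p.2 - p.1) ∂π = 0 := by
  have hIf := coupling_fst_integrable hπ hμint
  have hIs := coupling_snd_integrable hπ hνint
  obtain ⟨hprob, hfst, hsnd, hmart⟩ := hπ
  have h2 : ∫ p in C ×ˢ (univ : Set ℝ), p.2 ∂π = ∫ w in C, w ∂μ := hmart C hC
  have h1 : ∫ p in C ×ˢ (univ : Set ℝ), p.1 ∂π = ∫ w in C, w ∂μ := by
    have e := setIntegral_map (μ := π) (g := (Prod.fst : ℝ × ℝ → ℝ)) (f := fun w : ℝ => w) hC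
      measurable_id.aestronglyMeasurable measurable_fst.aemeasurable
    rw [← hfst, e, ← Set.prod_univ]
  rw [integral_sub hIs.integrableOn hIf.integrableOn, h1, h2, sub_self]

end Coupling

lemma ell_continuous (Θ f g : ℝ) : Continuous (ell Θ f g) := by
  unfold ell
  exact (continuous_const.mul ((continuous_const.sub continuous_id).max continuous_const)).add
    (continuous_const.mul ((continuous_const.sub continuous_id).max continuous_const))

lemma phi_continuous (Θ f x : ℝ) : Continuous (phi Θ f x) := by
  unfold phi
  exact continuous_const.mul (((continuous_const.sub continuous_id).max continuous_const).sub
    ((continuous_const.sub continuous_id).max continuous_const))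

lemma psi_measurable (Θ f g : ℝ) : Measurable (psi Θ f g) := by
  unfold psi
  refine Measurable.ite measurableSet_Iic measurable_const ?_
  exact Measurable.ite measurableSet_Iic measurable_const measurable_const

lemma psi_abs_le (Θ f g : ℝ) (h0 : 0 < Θ) (h1 : Θ < 1) (w : ℝ) : |psi Θ f g w| ≤ 1 := by
  unfold psi
  split_ifs with hf hg
  · simp
  · rw [abs_of_nonneg h0.le]; linarith
  · simp

lemma ell_integrable (η : Measure ℝ) [IsFiniteMeasure η]
    (h : Integrable (fun w => w) η) (Θ f g : ℝ) :
    Integrable (ell Θ f g) η := by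
  unfold ell
  exact ((put_integrable η h g).const_mul Θ).add ((put_integrable η h f).const_mul (1 - Θ))

lemma phi_integrable (η : Measure ℝ) [IsFiniteMeasure η]
    (h : Integrable (fun w => w) η) (Θ f x : ℝ) :
    Integrable (phi Θ f x) η := by
  unfold phi
  exact ((put_integrable η h x).sub (put_integrable η h f)).const_mul (1 - Θ)

section HedgeIntegral

variable {μ ν : Measure ℝ} {π : Measure (ℝ × ℝ)} {Θ f x g : ℝ}

/-- Integrability of the hedging portfolio, and its price under any martingale coupling. -/
lemma hedge_stuff (hπ : IsMartingaleCoupling μ ν π)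
    (hμint : Integrable (fun w => w) μ) (hνint : Integrable (fun w => w) ν)
    (h0 : 0 < Θ) (h1 : Θ < 1)
    (B : Set ℝ) (hB : MeasurableSet B) :
    Integrable (fun p : ℝ × ℝ =>
        phi Θ f x p.1 + ell Θ f g p.2 + B.indicator (psi Θ f g) p.1 * (p.2 - p.1)) π
    ∧ ∫ p : ℝ × ℝ,
        (phi Θ f x p.1 + ell Θ f g p.2 + B.indicator (psi Θ f g) p.1 * (p.2 - p.1)) ∂π
      = Θ * putPrice ν g + (1 - Θ) * putPrice ν f
        + (1 - Θ) * (putPrice μ x - putPrice μ f) := by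
  have hIf := coupling_fst_integrable hπ hμint
  have hIs := coupling_snd_integrable hπ hνint
  have hzero : ∀ C : Set ℝ, MeasurableSet C →
      ∫ p in C ×ˢ (univ : Set ℝ), (p.2 - p.1) ∂π = 0 :=
    fun C hC => coupling_mart_zero hπ hμint hνint C hC
  obtain ⟨hprob, hfst, hsnd, hmart⟩ := hπ
  haveI := hprob
  have hμ' : IsProbabilityMeasure μ := by
    rw [← hfst]; exact Measure.isProbabilityMeasure_map measurable_fst.aemeasurable
  have hν' : IsProbabilityMeasure ν := by
    rw [← hsnd]; exact Measure.isProbabilityMeasure_map measurable_snd.aemeasurable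
  have hIphi : Integrable (fun p : ℝ × ℝ => phi Θ f x p.1) π := by
    have h := phi_integrable μ hμint Θ f x
    rw [← hfst] at h
    have := (integrable_map_measure (phi_continuous Θ f x).aestronglyMeasurable
      measurable_fst.aemeasurable).mp h
    exact this
  have hIell : Integrable (fun p : ℝ × ℝ => ell Θ f g p.2) π := by
    have h := ell_integrable ν hνint Θ f g
    rw [← hsnd] at h
    have := (integrable_map_measure (ell_continuous Θ f g).aestronglyMeasurable
      measurable_snd.aemeasurable).mp h
    exact this
  have hmpsi : Measurable fun p : ℝ × ℝ => B.indicator (psi Θ f g) p.1 * (p.2 - p.1) :=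
    (((psi_measurable Θ f g).indicator hB).comp measurable_fst).mul
      (measurable_snd.sub measurable_fst)
  have hIm : Integrable (fun p : ℝ × ℝ => B.indicator (psi Θ f g) p.1 * (p.2 - p.1)) π := by
    refine (hIf.abs.add hIs.abs).mono' hmpsi.aestronglyMeasurable ?_
    filter_upwards with p
    simp only [Pi.add_apply]
    rw [Real.norm_eq_abs, abs_mul]
    have hb : |B.indicator (psi Θ f g) p.1| ≤ 1 := by
      by_cases h : p.1 ∈ B
      · rw [indicator_of_mem h]; exact psi_abs_le Θ f g h0 h1 p.1
      · rw [indicator_of_notMem h]; simp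
    have : |p.2 - p.1| ≤ |p.1| + |p.2| := by
      calc |p.2 - p.1| ≤ |p.2| + |p.1| := abs_sub _ _
        _ = |p.1| + |p.2| := by ring
    nlinarith [abs_nonneg (p.2 - p.1), abs_nonneg (B.indicator (psi Θ f g) p.1)]
  refine ⟨(hIphi.add hIell).add hIm, ?_⟩
  have hsplit := integral_add (hIphi.add hIell) hIm
  simp only [Pi.add_apply] at hsplit
  have hsplit2 := integral_add hIphi hIell
  rw [hsplit, hsplit2]
  have e1 : ∫ p : ℝ × ℝ, phi Θ f x p.1 ∂π = (1 - Θ) * (putPrice μ x - putPrice μ f) := by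
    have emap : ∫ w, phi Θ f x w ∂(Measure.map Prod.fst π) = ∫ p : ℝ × ℝ, phi Θ f x p.1 ∂π :=
      integral_map measurable_fst.aemeasurable (phi_continuous Θ f x).aestronglyMeasurable
    rw [← emap, hfst]
    unfold phi putPrice
    rw [integral_const_mul _ _, integral_sub (put_integrable μ hμint x) (put_integrable μ hμint f)]
  have e2 : ∫ p : ℝ × ℝ, ell Θ f g p.2 ∂π = Θ * putPrice ν g + (1 - Θ) * putPrice ν f := by
    have emap : ∫ w, ell Θ f g w ∂(Measure.map Prod.snd π) = ∫ p : ℝ × ℝ, ell Θ f g p.2 ∂π :=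
      integral_map measurable_snd.aemeasurable (ell_continuous Θ f g).aestronglyMeasurable
    rw [← emap, hsnd]
    unfold ell putPrice
    rw [integral_add ((put_integrable ν hνint g).const_mul Θ)
      ((put_integrable ν hνint f).const_mul (1 - Θ)), integral_const_mul _ _, integral_const_mul _ _]
  have e3 : ∫ p : ℝ × ℝ, B.indicator (psi Θ f g) p.1 * (p.2 - p.1) ∂π = 0 := by
    have hC₁ : MeasurableSet ((B ∩ Iic f) ×ˢ (univ : Set ℝ)) :=
      (hB.inter measurableSet_Iic).prod MeasurableSet.univ
    have hC₂ : MeasurableSet ((B ∩ Ioc f g) ×ˢ (univ : Set ℝ)) :=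
      (hB.inter measurableSet_Ioc).prod MeasurableSet.univ
    have hm_eq : ∀ p : ℝ × ℝ, B.indicator (psi Θ f g) p.1 * (p.2 - p.1)
        = ((B ∩ Iic f) ×ˢ (univ : Set ℝ)).indicator (fun q => q.2 - q.1) p
          + Θ * ((B ∩ Ioc f g) ×ˢ (univ : Set ℝ)).indicator (fun q => q.2 - q.1) p := by
      intro p
      by_cases hb : p.1 ∈ B
      · by_cases h2 : p.1 ≤ f
        · rw [Set.indicator_of_mem hb,
            Set.indicator_of_mem (show p ∈ (B ∩ Iic f) ×ˢ (univ : Set ℝ) from ⟨⟨hb, h2⟩, trivial⟩),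
            Set.indicator_of_notMem
              (show p ∉ (B ∩ Ioc f g) ×ˢ (univ : Set ℝ) from fun hp => (not_lt.mpr h2) hp.1.2.1)]
          unfold psi; rw [if_pos h2]; ring
        · by_cases h3 : p.1 ≤ g
          · rw [Set.indicator_of_mem hb,
              Set.indicator_of_notMem
                (show p ∉ (B ∩ Iic f) ×ˢ (univ : Set ℝ) from fun hp => h2 hp.1.2),
              Set.indicator_of_mem
                (show p ∈ (B ∩ Ioc f g) ×ˢ (univ : Set ℝ) from ⟨⟨hb, not_le.mp h2, h3⟩, trivial⟩)]
            unfold psi; rw [if_neg h2, if_pos h3]; ring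
          · rw [Set.indicator_of_mem hb,
              Set.indicator_of_notMem
                (show p ∉ (B ∩ Iic f) ×ˢ (univ : Set ℝ) from fun hp => h2 hp.1.2),
              Set.indicator_of_notMem
                (show p ∉ (B ∩ Ioc f g) ×ˢ (univ : Set ℝ) from fun hp => h3 hp.1.2.2)]
            unfold psi; rw [if_neg h2, if_neg h3]; ring
      · rw [Set.indicator_of_notMem hb,
          Set.indicator_of_notMem
            (show p ∉ (B ∩ Iic f) ×ˢ (univ : Set ℝ) from fun hp => hb hp.1.1),
          Set.indicator_of_notMem
            (show p ∉ (B ∩ Ioc f g) ×ˢ (univ : Set ℝ) from fun hp => hb hp.1.1)]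
        ring
    have Iind1 : Integrable (((B ∩ Iic f) ×ˢ (univ : Set ℝ)).indicator
        (fun q : ℝ × ℝ => q.2 - q.1)) π := (hIs.sub hIf).indicator hC₁
    have Iind2 : Integrable (((B ∩ Ioc f g) ×ˢ (univ : Set ℝ)).indicator
        (fun q : ℝ × ℝ => q.2 - q.1)) π := (hIs.sub hIf).indicator hC₂
    calc ∫ p : ℝ × ℝ, B.indicator (psi Θ f g) p.1 * (p.2 - p.1) ∂π
        = ∫ p : ℝ × ℝ, (((B ∩ Iic f) ×ˢ (univ : Set ℝ)).indicator (fun q => q.2 - q.1) p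
          + Θ * ((B ∩ Ioc f g) ×ˢ (univ : Set ℝ)).indicator (fun q => q.2 - q.1) p) ∂π :=
          integral_congr_ae (Filter.Eventually.of_forall hm_eq)
      _ = 0 := by
          rw [integral_add Iind1 (Iind2.const_mul Θ), integral_const_mul _ _,
            integral_indicator hC₁, integral_indicator hC₂,
            hzero _ (hB.inter measurableSet_Iic), hzero _ (hB.inter measurableSet_Ioc)]
          ring
  rw [e1, e2, e3]
  ring

/-- Integrability of the American-put payoff integrand. -/
lemma payoff_integrable (hπ : IsMartingaleCoupling μ ν π)
    (hμint : Integrable (fun w => w) μ) (hνint : Integrable (fun w => w) ν)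
    (K₁ K₂ : ℝ) (B : Set ℝ) (hB : MeasurableSet B) :
    Integrable (fun p : ℝ × ℝ => B.indicator (fun w => max (K₁ - w) 0) p.1
      + Bᶜ.indicator (fun _ => max (K₂ - p.2) 0) p.1) π := by
  haveI : IsProbabilityMeasure π := hπ.1
  have hIf := coupling_fst_integrable hπ hμint
  have hIs := coupling_snd_integrable hπ hνint
  have hfun : (fun p : ℝ × ℝ => Bᶜ.indicator (fun _ => max (K₂ - p.2) 0) p.1)
      = fun p : ℝ × ℝ => Bᶜ.indicator (fun _ => (1 : ℝ)) p.1 * max (K₂ - p.2) 0 := by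
    funext p
    by_cases h : p.1 ∈ Bᶜ
    · rw [indicator_of_mem h, indicator_of_mem h, one_mul]
    · rw [indicator_of_notMem h, indicator_of_notMem h, zero_mul]
  have hmeas1 : Measurable fun p : ℝ × ℝ => B.indicator (fun w => max (K₁ - w) 0) p.1 :=
    ((((continuous_const.sub continuous_id).max continuous_const).measurable).indicator
      hB).comp measurable_fst
  have hmeas2 : Measurable fun p : ℝ × ℝ => Bᶜ.indicator (fun _ => max (K₂ - p.2) 0) p.1 := by
    rw [hfun]
    exact ((measurable_const.indicator hB.compl).comp measurable_fst).mul
      (((continuous_const.sub continuous_id).max continuous_const).measurable.comp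
        measurable_snd)
  refine ((((integrable_const (|K₁|)).add hIf.abs).add
    ((integrable_const (|K₂|)).add hIs.abs)).mono' (hmeas1.add hmeas2).aestronglyMeasurable ?_)
  filter_upwards with p
  simp only [Pi.add_apply]
  have t1 : 0 ≤ B.indicator (fun w => max (K₁ - w) 0) p.1 :=
    indicator_nonneg (fun _ _ => le_max_right _ _) _
  have t2 : 0 ≤ Bᶜ.indicator (fun _ => max (K₂ - p.2) 0) p.1 :=
    indicator_nonneg (fun _ _ => le_max_right _ _) _
  have u1 : B.indicator (fun w => max (K₁ - w) 0) p.1 ≤ |K₁| + |p.1| := by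
    by_cases h : p.1 ∈ B
    · rw [indicator_of_mem h]
      exact max_le (by linarith [le_abs_self K₁, neg_abs_le p.1]) (by positivity)
    · rw [indicator_of_notMem h]; positivity
  have u2 : Bᶜ.indicator (fun _ => max (K₂ - p.2) 0) p.1 ≤ |K₂| + |p.2| := by
    by_cases h : p.1 ∈ Bᶜ
    · rw [indicator_of_mem h]
      exact max_le (by linarith [le_abs_self K₂, neg_abs_le p.2]) (by positivity)
    · rw [indicator_of_notMem h]; positivity
  rw [Real.norm_eq_abs, abs_of_nonneg (by linarith)]
  linarith

end HedgeIntegral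

section MainLemmas

variable {μ ν : Measure ℝ} {π : Measure (ℝ × ℝ)} {Θ f x g K₁ K₂ : ℝ}

/-- The upper bound for the payoff of any coupling and exercise set. -/
lemma payoff_le (S : Setup Θ f x g K₁ K₂) (hπ : IsMartingaleCoupling μ ν π)
    (hμint : Integrable (fun w => w) μ) (hνint : Integrable (fun w => w) ν)
    (B : Set ℝ) (hB : MeasurableSet B) :
    amPayoff K₁ K₂ π B ≤ Θ * putPrice ν g + (1 - Θ) * putPrice ν f
      + (1 - Θ) * (putPrice μ x - putPrice μ f) := by
  obtain ⟨hInt, hVal⟩ := hedge_stuff hπ hμint hνint S.hΘ0 S.hΘ1 B hB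
  unfold amPayoff
  calc ∫ p : ℝ × ℝ, (B.indicator (fun w => max (K₁ - w) 0) p.1
        + Bᶜ.indicator (fun _ => max (K₂ - p.2) 0) p.1) ∂π
      ≤ ∫ p : ℝ × ℝ,
          (phi Θ f x p.1 + ell Θ f g p.2 + B.indicator (psi Θ f g) p.1 * (p.2 - p.1)) ∂π :=
        integral_mono (payoff_integrable hπ hμint hνint K₁ K₂ B hB) hInt
          (fun p => Setup.hedge_ge S B p.1 p.2)
    _ = _ := hVal

/-- The payoff of the optimizer equals the hedging cost. -/
lemma payoff_attained (S : Setup Θ f x g K₁ K₂)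
    (hμint : Integrable (fun w => w) μ) (hνint : Integrable (fun w => w) ν)
    (hπs : IsMartingaleCoupling μ ν π)
    (h1 : π {p : ℝ × ℝ | p.1 < f ∧ p.2 ≠ p.1} = 0)
    (h2 : π {p : ℝ × ℝ | f < p.1 ∧ p.1 < x ∧ ¬ (f < p.2 ∧ p.2 < g)} = 0)
    (h3 : π {p : ℝ × ℝ | ¬ (f < p.1 ∧ p.1 < x) ∧ f < p.2 ∧ p.2 < g} = 0)
    (hf0 : μ {f} = 0) (hx0 : μ {x} = 0) :
    amPayoff K₁ K₂ π (Iio x) = Θ * putPrice ν g + (1 - Θ) * putPrice ν f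
      + (1 - Θ) * (putPrice μ x - putPrice μ f) := by
  obtain ⟨hInt, hVal⟩ := hedge_stuff hπs hμint hνint S.hΘ0 S.hΘ1 (Iio x) measurableSet_Iio
  have hNf : π (Prod.fst ⁻¹' {f}) = 0 := by
    calc π (Prod.fst ⁻¹' {f})
        = (π.map Prod.fst) {f} :=
          (Measure.map_apply measurable_fst (measurableSet_singleton f)).symm
      _ = μ {f} := by rw [hπs.2.1]
      _ = 0 := hf0
  have hNx : π (Prod.fst ⁻¹' {x}) = 0 := by
    calc π (Prod.fst ⁻¹' {x})
        = (π.map Prod.fst) {x} :=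
          (Measure.map_apply measurable_fst (measurableSet_singleton x)).symm
      _ = μ {x} := by rw [hπs.2.1]
      _ = 0 := hx0
  have hN : π ({p : ℝ × ℝ | p.1 < f ∧ p.2 ≠ p.1}
      ∪ {p : ℝ × ℝ | f < p.1 ∧ p.1 < x ∧ ¬ (f < p.2 ∧ p.2 < g)}
      ∪ {p : ℝ × ℝ | ¬ (f < p.1 ∧ p.1 < x) ∧ f < p.2 ∧ p.2 < g}
      ∪ Prod.fst ⁻¹' {f} ∪ Prod.fst ⁻¹' {x}) = 0 :=
    measure_union_null (measure_union_null (measure_union_null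
      (measure_union_null h1 h2) h3) hNf) hNx
  have hae := (measure_eq_zero_iff_ae_notMem).mp hN
  unfold amPayoff
  rw [integral_congr_ae (g := fun p : ℝ × ℝ =>
    phi Θ f x p.1 + ell Θ f g p.2 + (Iio x).indicator (psi Θ f g) p.1 * (p.2 - p.1)) ?_]
  · exact hVal
  · filter_upwards [hae] with p hp
    simp only [Set.mem_union, Set.mem_setOf_eq, Set.mem_preimage,
      Set.mem_singleton_iff, not_or] at hp
    obtain ⟨⟨⟨⟨hp1, hp2⟩, hp3⟩, hpf⟩, hpx⟩ := hp
    rcases lt_trichotomy p.1 f with hc | hc | hc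
    · -- p.1 < f, so p.2 = p.1
      have hyy : p.2 = p.1 := by
        by_contra hne
        exact hp1 ⟨hc, hne⟩
      have hmem : p.1 ∈ Iio x := mem_Iio.mpr (hc.trans S.hfx)
      rw [indicator_of_mem hmem, indicator_of_mem hmem,
        indicator_of_notMem (notMem_compl_iff.mpr hmem), add_zero]
      unfold phi ell psi
      rw [if_pos hc.le,
        max_eq_left (by linarith [S.hfx, S.hxK₁] : 0 ≤ K₁ - p.1),
        max_eq_left (by linarith [S.hfx] : 0 ≤ x - p.1),
        max_eq_left (by linarith : 0 ≤ f - p.1),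
        max_eq_left (by rw [hyy]; linarith [S.hfx, S.hxg] : 0 ≤ g - p.2),
        max_eq_left (by rw [hyy]; linarith : 0 ≤ f - p.2), hyy]
      linear_combination -S.hB
    · exact absurd hc hpf
    · rcases lt_trichotomy p.1 x with hd | hd | hd
      · -- f < p.1 < x, so f < p.2 < g
        have hy : f < p.2 ∧ p.2 < g := by
          by_contra hq
          exact hp2 ⟨hc, hd, hq⟩
        have hmem : p.1 ∈ Iio x := mem_Iio.mpr hd
        rw [indicator_of_mem hmem, indicator_of_mem hmem,
          indicator_of_notMem (notMem_compl_iff.mpr hmem), add_zero]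
        unfold phi ell psi
        rw [if_neg (not_le.mpr hc), if_pos (by linarith [S.hxg] : p.1 ≤ g),
          max_eq_left (by linarith [S.hxK₁] : 0 ≤ K₁ - p.1),
          max_eq_left (by linarith : 0 ≤ x - p.1),
          max_eq_right (by linarith : f - p.1 ≤ 0),
          max_eq_left (by linarith [hy.2] : 0 ≤ g - p.2),
          max_eq_right (by linarith [hy.1] : f - p.2 ≤ 0)]
        linear_combination -S.hB
      · exact absurd hd hpx
      · -- x < p.1, so ¬ (f < p.2 < g)
        have hny : ¬ (f < p.2 ∧ p.2 < g) := by
          intro hq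
          exact hp3 ⟨fun hh => absurd hh.2 (not_lt.mpr hd.le), hq⟩
        have hnmem : p.1 ∉ Iio x := by simp [mem_Iio, not_lt.mpr hd.le]
        rw [indicator_of_notMem hnmem, indicator_of_notMem hnmem,
          indicator_of_mem (mem_compl hnmem), zero_mul, add_zero, zero_add]
        unfold phi ell
        rw [max_eq_right (by linarith : x - p.1 ≤ 0),
          max_eq_right (by linarith [S.hfx] : f - p.1 ≤ 0)]
        rcases not_and_or.mp hny with hq | hq
        · have hle : p.2 ≤ f := not_lt.mp hq
          rw [max_eq_left (by linarith [S.hfK₂] : 0 ≤ K₂ - p.2),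
            max_eq_left (by linarith [S.hfx, S.hxg] : 0 ≤ g - p.2),
            max_eq_left (by linarith : 0 ≤ f - p.2)]
          linear_combination -S.hA
        · have hge : g ≤ p.2 := not_lt.mp hq
          rw [max_eq_right (by linarith [S.hK₂g] : K₂ - p.2 ≤ 0),
            max_eq_right (by linarith : g - p.2 ≤ 0),
            max_eq_right (by linarith [S.hfx, S.hxg] : f - p.2 ≤ 0)]
          ring

end MainLemmas

/-- Optimality of the left-curtain-type model: if a martingale coupling `πs` keeps mass
below `f` constant, maps `(f,x)` into `(f,g)` and nothing else into `(f,g)`, then the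
supremum of the American-put payoff over all martingale couplings and Borel exercise
sets equals `Θ·P_ν(g) + (1-Θ)·P_ν(f) + (1-Θ)·(P_μ(x)-P_μ(f))`, attained by `πs` with
exercise set `(-∞, x)`. -/
theorem optimal_model_dispersion
    (μ ν : Measure ℝ) [IsProbabilityMeasure μ] [IsProbabilityMeasure ν]
    (hμint : Integrable (fun w => w) μ) (hνint : Integrable (fun w => w) ν)
    (hμa : ∀ w : ℝ, μ {w} = 0) (hνa : ∀ w : ℝ, ν {w} = 0)
    (f x g K₁ K₂ : ℝ)
    (hfx : f < x) (hxg : x < g) (hK : K₂ < K₁)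
    (hfK₂ : f < K₂) (hxK₁ : x < K₁) (hK₁g : K₁ < g)
    (hmass : μ (Set.Ioo f x) = ν (Set.Ioo f g))
    (hmean : ∫ w in Set.Ioo f x, w ∂μ = ∫ w in Set.Ioo f g, w ∂ν)
    (hΘ : (K₂ - f) / (g - f) = (K₁ - x) / (g - x))
    (πs : Measure (ℝ × ℝ)) (hπs : IsMartingaleCoupling μ ν πs)
    (h1 : πs {p : ℝ × ℝ | p.1 < f ∧ p.2 ≠ p.1} = 0)
    (h2 : πs {p : ℝ × ℝ | f < p.1 ∧ p.1 < x ∧ ¬ (f < p.2 ∧ p.2 < g)} = 0)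
    (h3 : πs {p : ℝ × ℝ | ¬ (f < p.1 ∧ p.1 < x) ∧ f < p.2 ∧ p.2 < g} = 0) :
    sSup { r : ℝ | ∃ π : Measure (ℝ × ℝ), ∃ B : Set ℝ,
        IsMartingaleCoupling μ ν π ∧ MeasurableSet B ∧ r = amPayoff K₁ K₂ π B }
      = ((K₂ - f) / (g - f)) * putPrice ν g
        + (1 - (K₂ - f) / (g - f)) * putPrice ν f
        + (1 - (K₂ - f) / (g - f)) * (putPrice μ x - putPrice μ f) ∧
    amPayoff K₁ K₂ πs (Set.Iio x)
      = ((K₂ - f) / (g - f)) * putPrice ν g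
        + (1 - (K₂ - f) / (g - f)) * putPrice ν f
        + (1 - (K₂ - f) / (g - f)) * (putPrice μ x - putPrice μ f) := by
  have hgf : (0:ℝ) < g - f := by linarith
  have hgx : (0:ℝ) < g - x := by linarith
  have S : Setup ((K₂ - f) / (g - f)) f x g K₁ K₂ :=
    { hfx := hfx, hxg := hxg, hfK₂ := hfK₂, hxK₁ := hxK₁, hK₁g := hK₁g,
      hA := div_mul_cancel₀ _ (ne_of_gt hgf),
      hB := by rw [hΘ]; exact div_mul_cancel₀ _ (ne_of_gt hgx) }
  have hatt : amPayoff K₁ K₂ πs (Set.Iio x)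
      = ((K₂ - f) / (g - f)) * putPrice ν g
        + (1 - (K₂ - f) / (g - f)) * putPrice ν f
        + (1 - (K₂ - f) / (g - f)) * (putPrice μ x - putPrice μ f) :=
    payoff_attained S hμint hνint hπs h1 h2 h3 (hμa f) (hμa x)
  refine ⟨?_, hatt⟩
  apply IsGreatest.csSup_eq
  constructor
  · exact ⟨πs, Set.Iio x, hπs, measurableSet_Iio, hatt.symm⟩
  · rintro r ⟨π, B, hπ, hB, rfl⟩
    exact payoff_le S hπ hμint hνint B hB
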